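/- There exists a constant C > 0 such that for every s ∈ ℚ(√2) ∩ [0, √2], one has f(s) ∈ ℚ(√2) and |conj(f(s))| ≤ β·|conj(s)| + C. (Here conj denotes the Galois conjugation of ℚ(√2).) -/
import Mathlib


noncomputable section

/-- `β = √2 - 1`. -/
def β : ℝ := Real.sqrt 2 - 1

/-- `ω = √2 + 1`. -/
def ω : ℝ := Real.sqrt 2 + 1

/-- The break points `Δ_i`. -/
def Δ (i : ℤ) : ℝ :=
  if i < 0 then β ^ i.natAbs
  else if i = 0 then β
  else Real.sqrt 2 - β ^ i.natAbs

/-- The intervals `I_i`. -/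
def Iint (i : ℤ) : Set ℝ :=
  if i < 0 then Set.Ioc (Δ (i - 1)) (Δ i)
  else if i = 0 then Set.Ioo β 1
  else Set.Ico (Δ i) (Δ (i + 1))

/-- The defining formula of `f` on the interval `I_i`. -/
def fval (i : ℤ) (s : ℝ) : ℝ :=
  if i < 0 then ω ^ (i.natAbs + 1) * (Δ i - s)
  else if i = 0 then ω * (s - β)
  else ω ^ (i.natAbs + 1) * (s - Δ i)

/-- `f` is the renormalization map: `f 0 = f √2 = 0` and on each interval `I_i`
    it is given by the corresponding affine formula. These conditions determine
    `f` uniquely on `[0, √2]`. -/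
def IsLuroth (f : ℝ → ℝ) : Prop :=
  f 0 = 0 ∧ f (Real.sqrt 2) = 0 ∧ ∀ i : ℤ, ∀ s ∈ Iint i, f s = fval i s

/-- `ℚ(√2)` as a subset of `ℝ`. -/
def QSqrt2 : Set ℝ := {x | ∃ a b : ℚ, x = (a : ℝ) + (b : ℝ) * Real.sqrt 2}

/-- `ℤ[√2]` as a subset of `ℝ`. -/
def ZSqrt2 : Set ℝ := {x | ∃ m n : ℤ, x = (m : ℝ) + (n : ℝ) * Real.sqrt 2}

/-- `M_d = {s ∈ [0,√2] : d·s ∈ ℤ[√2]}`. -/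
def Mset (d : ℤ) : Set ℝ :=
  {s | s ∈ Set.Icc 0 (Real.sqrt 2) ∧ (d : ℝ) * s ∈ ZSqrt2}

lemma sqrt2_sq : Real.sqrt 2 * Real.sqrt 2 = 2 := Real.mul_self_sqrt (by norm_num)
lemma sqrt2_gt_one : (1:ℝ) < Real.sqrt 2 := by
  nlinarith [sqrt2_sq, Real.sqrt_nonneg 2]
lemma sqrt2_lt_two : Real.sqrt 2 < 2 := by
  nlinarith [sqrt2_sq, Real.sqrt_nonneg 2]
lemma beta_pos : 0 < β := by have := sqrt2_gt_one; simp [β]; linarith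
lemma beta_lt_one : β < 1 := by have := sqrt2_lt_two; simp [β]; linarith
lemma omega_pos : 0 < ω := by have := sqrt2_gt_one; simp [ω]; linarith
lemma beta_mul_omega : β * ω = 1 := by
  have := sqrt2_sq; simp [β, ω]; ring_nf; nlinarith

lemma rat_unique {a b a' b' : ℚ}
    (h : (a:ℝ) + b * Real.sqrt 2 = (a':ℝ) + b' * Real.sqrt 2) : a = a' ∧ b = b' := by
  by_cases hb : b = b'
  · subst hb
    constructor
    · exact_mod_cast (by linarith : (a:ℝ) = a')
    · rfl
  · exfalso
    have hbR : (b:ℝ) ≠ b' := by exact_mod_cast hb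
    have : Real.sqrt 2 = ((a' - a) / (b - b') : ℚ) := by
      push_cast
      rw [eq_div_iff (by exact_mod_cast sub_ne_zero.mpr hb : ((b:ℝ) - b') ≠ 0)]
      ring_nf
      nlinarith
    exact irrational_sqrt_two ⟨_, this.symm⟩

lemma omega_pow (n : ℕ) : ∃ P Q : ℚ,
    ω ^ n = (P:ℝ) + Q * Real.sqrt 2 ∧ (P:ℝ) - Q * Real.sqrt 2 = (-β) ^ n := by
  induction n with
  | zero => exact ⟨1, 0, by norm_num, by norm_num⟩
  | succ n ih =>
    obtain ⟨P, Q, h1, h2⟩ := ih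
    refine ⟨P + 2*Q, P + Q, ?_, ?_⟩
    · rw [pow_succ, h1]
      push_cast
      unfold ω
      linear_combination (Q : ℝ) * sqrt2_sq
    · rw [pow_succ, ← h2]
      push_cast
      unfold β
      linear_combination (-(Q:ℝ)) * sqrt2_sq

lemma beta_pow (n : ℕ) : ∃ P Q : ℚ,
    β ^ n = (P:ℝ) + Q * Real.sqrt 2 ∧ (P:ℝ) - Q * Real.sqrt 2 = (-ω) ^ n := by
  induction n with
  | zero => exact ⟨1, 0, by norm_num, by norm_num⟩
  | succ n ih =>
    obtain ⟨P, Q, h1, h2⟩ := ih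
    refine ⟨-P + 2*Q, P - Q, ?_, ?_⟩
    · rw [pow_succ, h1]
      push_cast
      unfold β
      linear_combination (Q : ℝ) * sqrt2_sq
    · rw [pow_succ, ← h2]
      push_cast
      unfold ω
      linear_combination (-(Q:ℝ)) * sqrt2_sq

/-- The key computation: on each branch formula, the conjugate contracts. -/
lemma fval_conj (i : ℤ) (a b : ℚ) :
    ∃ A B : ℚ, fval i ((a:ℝ) + b * Real.sqrt 2) = (A:ℝ) + B * Real.sqrt 2 ∧
      |(A:ℝ) - B * Real.sqrt 2| ≤ β * |(a:ℝ) - b * Real.sqrt 2| + 3 := by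
  have hbp := beta_pos
  have hb1 := beta_lt_one
  have hop := omega_pos
  have hbo := beta_mul_omega
  have hs2 := sqrt2_sq
  have hs2p := sqrt2_gt_one
  have hs2l := sqrt2_lt_two
  have hXn : (0:ℝ) ≤ |(a:ℝ) - b * Real.sqrt 2| := abs_nonneg _
  rcases lt_trichotomy i 0 with hi | hi | hi
  · -- i < 0
    set n := i.natAbs with hn
    obtain ⟨P, Q, hPQ, hPQc⟩ := omega_pow (n+1)
    obtain ⟨R, S, hRS, hRSc⟩ := beta_pow n
    refine ⟨P*(R-a) + 2*Q*(S-b), P*(S-b) + Q*(R-a), ?_, ?_⟩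
    · simp only [fval, Δ, if_pos hi]
      rw [hPQ, hRS]
      push_cast
      linear_combination ((Q:ℝ)*(S-b)) * hs2
    · have key : ((P*(R-a) + 2*Q*(S-b) : ℚ) : ℝ) - ((P*(S-b) + Q*(R-a) : ℚ):ℝ) * Real.sqrt 2
          = ((P:ℝ) - Q * Real.sqrt 2) * (((R:ℝ) - S * Real.sqrt 2) - ((a:ℝ) - b * Real.sqrt 2)) := by
        push_cast
        linear_combination (-(Q:ℝ)*(S-b)) * hs2
      rw [key, hPQc, hRSc, abs_mul, abs_pow, abs_neg, abs_of_pos hbp]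
      have htri : |(-ω) ^ n - ((a:ℝ) - b * Real.sqrt 2)| ≤ ω ^ n + |(a:ℝ) - b * Real.sqrt 2| := by
        calc |(-ω) ^ n - ((a:ℝ) - b * Real.sqrt 2)| ≤ |(-ω) ^ n| + |(a:ℝ) - b * Real.sqrt 2| :=
              abs_sub _ _
          _ = ω ^ n + |(a:ℝ) - b * Real.sqrt 2| := by
              rw [abs_pow, abs_neg, abs_of_pos hop]
      have h1 : β ^ (n+1) * |(-ω) ^ n - ((a:ℝ) - b * Real.sqrt 2)|
          ≤ β ^ (n+1) * (ω ^ n + |(a:ℝ) - b * Real.sqrt 2|) :=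
        mul_le_mul_of_nonneg_left htri (pow_nonneg hbp.le _)
      have h2 : β ^ (n+1) * ω ^ n = β := by
        rw [pow_succ', mul_assoc, ← mul_pow, hbo, one_pow, mul_one]
      have h3 : β ^ (n+1) ≤ β := by
        calc β ^ (n+1) = β * β ^ n := by rw [pow_succ']
          _ ≤ β * 1 := mul_le_mul_of_nonneg_left (pow_le_one₀ hbp.le hb1.le) hbp.le
          _ = β := mul_one β
      have h4 : β ^ (n+1) * |(a:ℝ) - b * Real.sqrt 2| ≤ β * |(a:ℝ) - b * Real.sqrt 2| :=
        mul_le_mul_of_nonneg_right h3 hXn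
      nlinarith [h1, h2, h4]
  · -- i = 0
    subst hi
    refine ⟨a + 2*b - 1, a + b, ?_, ?_⟩
    · simp only [fval, if_neg (lt_irrefl (0:ℤ)), if_pos rfl]
      unfold ω β
      push_cast
      linear_combination ((b:ℝ)-1) * hs2
    · have key : ((a + 2*b - 1 : ℚ) : ℝ) - ((a + b : ℚ):ℝ) * Real.sqrt 2
          = (-β) * (((a:ℝ) - b * Real.sqrt 2) + ω) := by
        unfold ω β
        push_cast
        linear_combination ((1:ℝ)-(b:ℝ)) * hs2
      rw [key, abs_mul, abs_neg, abs_of_pos hbp]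
      have htri : |((a:ℝ) - b * Real.sqrt 2) + ω| ≤ |(a:ℝ) - b * Real.sqrt 2| + ω := by
        calc |((a:ℝ) - b * Real.sqrt 2) + ω| ≤ |(a:ℝ) - b * Real.sqrt 2| + |ω| := abs_add_le _ _
          _ = |(a:ℝ) - b * Real.sqrt 2| + ω := by rw [abs_of_pos hop]
      nlinarith [mul_le_mul_of_nonneg_left htri hbp.le]
  · -- i > 0
    set n := i.natAbs with hn
    obtain ⟨P, Q, hPQ, hPQc⟩ := omega_pow (n+1)
    obtain ⟨R, S, hRS, hRSc⟩ := beta_pow n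
    have hne : ¬ i < 0 := by omega
    have hne0 : ¬ i = 0 := by omega
    refine ⟨P*(a+R) + 2*Q*(b+S-1), P*(b+S-1) + Q*(a+R), ?_, ?_⟩
    · simp only [fval, Δ, if_neg hne, if_neg hne0]
      rw [hPQ, hRS]
      push_cast
      linear_combination ((Q:ℝ)*(b+S-1)) * hs2
    · have key : ((P*(a+R) + 2*Q*(b+S-1) : ℚ) : ℝ) - ((P*(b+S-1) + Q*(a+R) : ℚ):ℝ) * Real.sqrt 2
          = ((P:ℝ) - Q * Real.sqrt 2) * ((((a:ℝ) - b * Real.sqrt 2) + ((R:ℝ) - S * Real.sqrt 2)) + Real.sqrt 2) := by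
        push_cast
        linear_combination (-(Q:ℝ)*(b+S-1)) * hs2
      rw [key, hPQc, hRSc, abs_mul, abs_pow, abs_neg, abs_of_pos hbp]
      have htri : |(((a:ℝ) - b * Real.sqrt 2) + (-ω) ^ n) + Real.sqrt 2|
          ≤ |(a:ℝ) - b * Real.sqrt 2| + ω ^ n + Real.sqrt 2 := by
        calc |(((a:ℝ) - b * Real.sqrt 2) + (-ω) ^ n) + Real.sqrt 2|
            ≤ |((a:ℝ) - b * Real.sqrt 2) + (-ω) ^ n| + |Real.sqrt 2| := abs_add_le _ _
          _ ≤ |(a:ℝ) - b * Real.sqrt 2| + |(-ω) ^ n| + |Real.sqrt 2| := by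
              have := abs_add_le ((a:ℝ) - b * Real.sqrt 2) ((-ω) ^ n)
              linarith
          _ = |(a:ℝ) - b * Real.sqrt 2| + ω ^ n + Real.sqrt 2 := by
              rw [abs_pow, abs_neg, abs_of_pos hop, abs_of_pos (by linarith : (0:ℝ) < Real.sqrt 2)]
      have h1 : β ^ (n+1) * |(((a:ℝ) - b * Real.sqrt 2) + (-ω) ^ n) + Real.sqrt 2|
          ≤ β ^ (n+1) * (|(a:ℝ) - b * Real.sqrt 2| + ω ^ n + Real.sqrt 2) :=
        mul_le_mul_of_nonneg_left htri (pow_nonneg hbp.le _)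
      have h2 : β ^ (n+1) * ω ^ n = β := by
        rw [pow_succ', mul_assoc, ← mul_pow, hbo, one_pow, mul_one]
      have h3 : β ^ (n+1) ≤ β := by
        calc β ^ (n+1) = β * β ^ n := by rw [pow_succ']
          _ ≤ β * 1 := mul_le_mul_of_nonneg_left (pow_le_one₀ hbp.le hb1.le) hbp.le
          _ = β := mul_one β
      have h4 : β ^ (n+1) * |(a:ℝ) - b * Real.sqrt 2| ≤ β * |(a:ℝ) - b * Real.sqrt 2| :=
        mul_le_mul_of_nonneg_right h3 hXn
      nlinarith [h1, h2, h4, mul_le_mul_of_nonneg_right h3 (by linarith : (0:ℝ) ≤ Real.sqrt 2)]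

lemma Δ_neg {i : ℤ} (h : i < 0) : Δ i = β ^ i.natAbs := if_pos h

lemma Δ_pos {i : ℤ} (h : 0 < i) : Δ i = Real.sqrt 2 - β ^ i.natAbs := by
  unfold Δ
  rw [if_neg (by omega), if_neg (by omega)]

lemma exists_pow_between {t : ℝ} (ht : 0 < t) (ht' : t ≤ β) :
    ∃ n : ℕ, 1 ≤ n ∧ β ^ (n+1) < t ∧ t ≤ β ^ n := by
  classical
  have hex : ∃ k, β ^ k < t := exists_pow_lt_of_lt_one ht beta_lt_one
  set m := Nat.find hex with hmdef
  have hm : β ^ m < t := Nat.find_spec hex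
  have h0 : ¬ β ^ 0 < t := by
    simp only [pow_zero, not_lt]
    linarith [beta_lt_one]
  have h1 : ¬ β ^ 1 < t := by
    simp only [pow_one, not_lt]
    exact ht'
  have hm0 : m ≠ 0 := fun h => h0 (h ▸ hm)
  have hm1 : m ≠ 1 := fun h => h1 (h ▸ hm)
  refine ⟨m - 1, by omega, ?_, ?_⟩
  · have h : m - 1 + 1 = m := by omega
    rw [h]
    exact hm
  · exact not_lt.mp (Nat.find_min hex (by omega))

lemma mem_interval {s : ℝ} (h0 : 0 < s) (h2 : s < Real.sqrt 2) : ∃ i, s ∈ Iint i := by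
  rcases le_or_gt s β with h | h
  · obtain ⟨n, hn1, hl, hr⟩ := exists_pow_between h0 h
    refine ⟨-(n:ℤ), ?_⟩
    have hneg : (-(n:ℤ)) < 0 := by omega
    have hA : (-(n:ℤ) - 1).natAbs = n + 1 := by omega
    have hB : (-(n:ℤ)).natAbs = n := by omega
    unfold Iint
    rw [if_pos hneg, Δ_neg (by omega : -(n:ℤ) - 1 < 0), Δ_neg hneg, hA, hB]
    exact ⟨hl, hr⟩
  · rcases lt_or_ge s 1 with h1 | h1
    · refine ⟨0, ?_⟩
      unfold Iint
      rw [if_neg (lt_irrefl 0), if_pos rfl]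
      exact ⟨h, h1⟩
    · have ht0 : 0 < Real.sqrt 2 - s := by linarith
      have ht1 : Real.sqrt 2 - s ≤ β := by unfold β; linarith
      obtain ⟨n, hn1, hl, hr⟩ := exists_pow_between ht0 ht1
      refine ⟨(n:ℤ), ?_⟩
      have hA : ((n:ℤ)).natAbs = n := by omega
      have hB : ((n:ℤ) + 1).natAbs = n + 1 := by omega
      unfold Iint
      rw [if_neg (by omega : ¬ ((n:ℤ) < 0)), if_neg (by omega : ¬ ((n:ℤ) = 0)),
        Δ_pos (by omega : (0:ℤ) < (n:ℤ)), Δ_pos (by omega : (0:ℤ) < (n:ℤ) + 1), hA, hB]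
      constructor <;> [linarith; linarith]


/-- there is a constant `C > 0` such that for every
`s ∈ ℚ(√2) ∩ [0,√2]` one has `f s ∈ ℚ(√2)` and
`|conj (f s)| ≤ β·|conj s| + C`, where `conj (a + b√2) = a - b√2`. -/
theorem luroth_conj_contraction (f : ℝ → ℝ) (hf : IsLuroth f) :
    ∃ C : ℝ, 0 < C ∧
      ∀ s ∈ QSqrt2 ∩ Set.Icc (0 : ℝ) (Real.sqrt 2),
        f s ∈ QSqrt2 ∧
        ∀ a b a' b' : ℚ,
          s = (a : ℝ) + (b : ℝ) * Real.sqrt 2 →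
          f s = (a' : ℝ) + (b' : ℝ) * Real.sqrt 2 →
          |(a' : ℝ) - (b' : ℝ) * Real.sqrt 2| ≤
            β * |(a : ℝ) - (b : ℝ) * Real.sqrt 2| + C := by
  obtain ⟨hf0, hfs2, hfI⟩ := hf
  refine ⟨3, by norm_num, ?_⟩
  rintro s ⟨⟨a₀, b₀, hs⟩, hs0, hs2⟩
  have hzero : ∀ (hfs : f s = 0),
      (f s ∈ QSqrt2 ∧ ∀ a b a' b' : ℚ,
        s = (a : ℝ) + (b : ℝ) * Real.sqrt 2 →
        f s = (a' : ℝ) + (b' : ℝ) * Real.sqrt 2 →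
        |(a' : ℝ) - (b' : ℝ) * Real.sqrt 2| ≤
          β * |(a : ℝ) - (b : ℝ) * Real.sqrt 2| + 3) := by
    intro hfs
    refine ⟨⟨0, 0, by rw [hfs]; norm_num⟩, ?_⟩
    intro a b a' b' h1 h2
    have heq : ((0:ℚ):ℝ) + ((0:ℚ):ℝ) * Real.sqrt 2 = (a':ℝ) + b' * Real.sqrt 2 := by
      rw [← h2, hfs]; norm_num
    obtain ⟨ea, eb⟩ := rat_unique heq
    rw [← ea, ← eb]
    push_cast
    simp only [zero_mul, sub_zero, abs_zero]
    nlinarith [mul_nonneg beta_pos.le (abs_nonneg ((a:ℝ) - b * Real.sqrt 2))]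
  rcases eq_or_lt_of_le hs0 with h0 | h0
  · exact hzero (by rw [← h0]; exact hf0)
  rcases eq_or_lt_of_le hs2 with h2' | h2'
  · exact hzero (by rw [h2']; exact hfs2)
  obtain ⟨i, hi⟩ := mem_interval h0 h2'
  have hfs : f s = fval i s := hfI i s hi
  constructor
  · obtain ⟨A, B, hAB, _⟩ := fval_conj i a₀ b₀
    refine ⟨A, B, ?_⟩
    rw [hfs, hs]
    exact hAB
  · intro a b a' b' h1 h2
    obtain ⟨A, B, hAB, hbd⟩ := fval_conj i a b
    have heq : (a':ℝ) + b' * Real.sqrt 2 = (A:ℝ) + B * Real.sqrt 2 := by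
      rw [← h2, hfs, h1]
      exact hAB
    obtain ⟨ea, eb⟩ := rat_unique heq
    rw [ea, eb]
    exact hbd
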